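/- Let ℓ and n be natural numbers with 2 < ℓ ≤ n and ℓ dividing n, let w₁, …, wₙ be nonnegative reals with average a = (1/n)·∑_{i=1}^n wᵢ, and consider n papers where paper i has ℓ weight entries: one entry of value wᵢ and ℓ − 1 entries of value 0. Let Θ ⊆ ℝⁿ be the set of sorted mean-weight vectors of all valid assignments of the weight entries to the n reviewers, and let v ∈ ℝⁿ be the vector whose first n − n/ℓ coordinates are 0 and whose last n/ℓ coordinates are a. Then v lies in the convex hull of Θ if and only if the multiset {w₁, …, wₙ} can be partitioned into n/ℓ sub-multisets each of cardinality ℓ and each of sum ℓ·a. -/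

import Mathlib

/-- An assignment of the weight entries `(i, s)` (paper `i`, entry `s`) to reviewers is valid
if each reviewer gets exactly `ℓ` entries and no reviewer gets two entries from the same paper. -/
def ValidAssign (m k n ℓ : ℕ) (f : Fin m × Fin k → Fin n) : Prop :=
  (∀ j : Fin n, (Finset.univ.filter (fun e : Fin m × Fin k => f e = j)).card = ℓ) ∧
  ∀ (i : Fin m) (s s' : Fin k), f (i, s) = f (i, s') → s = s'

/-- The mean weight of reviewer `j`: `(1/ℓ)` times the sum of the values of the entries
assigned to `j`. -/
noncomputable def meanWeight (m k n ℓ : ℕ) (x : Fin m × Fin k → ℝ)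
    (f : Fin m × Fin k → Fin n) (j : Fin n) : ℝ :=
  (1 / (ℓ : ℝ)) * ∑ e ∈ Finset.univ.filter (fun e : Fin m × Fin k => f e = j), x e

/-- The set `Θ` of sorted mean-weight vectors of all valid assignments: a vector `θ` lies in
`Θ` iff it is nondecreasing and its coordinates form the same multiset as the reviewer mean
weights of some valid assignment. -/
def sortedMeanVecSet (m k n ℓ : ℕ) (x : Fin m × Fin k → ℝ) : Set (Fin n → ℝ) :=
  {θ | Monotone θ ∧ ∃ f : Fin m × Fin k → Fin n, ValidAssign m k n ℓ f ∧
    Multiset.map θ (Finset.univ : Finset (Fin n)).val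
      = Multiset.map (meanWeight m k n ℓ x f) (Finset.univ : Finset (Fin n)).val}

section AuxForVInConvexHull
open Finset


/-- raw value of the constructed assignment -/
def fval (ℓ n : ℕ) (g : Fin n → Fin (n / ℓ)) (e : Fin n × Fin ℓ) : ℕ :=
  if (e.2 : ℕ) = 0 then n - n / ℓ + (g e.1 : ℕ)
  else ((e.1 : ℕ) / ℓ) * (ℓ - 1) + ((e.2 : ℕ) - 1)

lemma nq_facts (ℓ n : ℕ) (hℓ : 2 < ℓ) (hℓn : ℓ ≤ n) (hdvd : ℓ ∣ n) :
    (n / ℓ) * ℓ = n ∧ 0 < n / ℓ ∧ n / ℓ ≤ n ∧ (n / ℓ) * (ℓ - 1) = n - n / ℓ := by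
  have hq : (n / ℓ) * ℓ = n := Nat.div_mul_cancel hdvd
  have hp : 0 < n / ℓ := Nat.div_pos hℓn (by omega)
  have hle : n / ℓ ≤ n := Nat.div_le_self n ℓ
  refine ⟨hq, hp, hle, ?_⟩
  have : (n / ℓ) * (ℓ - 1) + n / ℓ = n := by
    calc (n / ℓ) * (ℓ - 1) + n / ℓ = (n / ℓ) * (ℓ - 1 + 1) := by ring
      _ = n := by rw [show ℓ - 1 + 1 = ℓ from by omega, hq]
  omega

lemma fval_low (ℓ n : ℕ) (hℓ : 2 < ℓ) (hℓn : ℓ ≤ n) (hdvd : ℓ ∣ n)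
    (g : Fin n → Fin (n / ℓ)) (i : Fin n) (s : Fin ℓ) (hs : (s : ℕ) ≠ 0) :
    fval ℓ n g (i, s) < n - n / ℓ ∧
    fval ℓ n g (i, s) = ((i : ℕ) / ℓ) * (ℓ - 1) + ((s : ℕ) - 1) := by
  obtain ⟨hq, hp, hle, hnq⟩ := nq_facts ℓ n hℓ hℓn hdvd
  have hu : (i : ℕ) / ℓ < n / ℓ :=
    (Nat.div_lt_iff_lt_mul (by omega : 0 < ℓ)).mpr (by rw [Nat.mul_comm, Nat.mul_comm ℓ (n/ℓ) , hq]; exact i.2)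
  have hs' : (s : ℕ) - 1 < ℓ - 1 := by have := s.2; omega
  have key : ((i : ℕ) / ℓ) * (ℓ - 1) + ((s : ℕ) - 1) < (n / ℓ) * (ℓ - 1) :=
    calc ((i : ℕ) / ℓ) * (ℓ - 1) + ((s : ℕ) - 1)
        < ((i : ℕ) / ℓ) * (ℓ - 1) + (ℓ - 1) := by omega
      _ = ((i : ℕ) / ℓ + 1) * (ℓ - 1) := by ring
      _ ≤ (n / ℓ) * (ℓ - 1) := Nat.mul_le_mul_right _ (by omega)
  have h2 : fval ℓ n g (i, s) = ((i : ℕ) / ℓ) * (ℓ - 1) + ((s : ℕ) - 1) := by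
    simp only [fval, if_neg hs]
  exact ⟨by omega, h2⟩

lemma fval_high (ℓ n : ℕ) (g : Fin n → Fin (n / ℓ)) (i : Fin n) (s : Fin ℓ)
    (hs : (s : ℕ) = 0) : fval ℓ n g (i, s) = n - n / ℓ + (g i : ℕ) := by
  simp only [fval, if_pos hs]

lemma fval_lt (ℓ n : ℕ) (hℓ : 2 < ℓ) (hℓn : ℓ ≤ n) (hdvd : ℓ ∣ n)
    (g : Fin n → Fin (n / ℓ)) (e : Fin n × Fin ℓ) : fval ℓ n g e < n := by
  obtain ⟨hq, hp, hle, hnq⟩ := nq_facts ℓ n hℓ hℓn hdvd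
  obtain ⟨i, s⟩ := e
  by_cases hs : (s : ℕ) = 0
  · rw [fval_high ℓ n g i s hs]
    have := (g i).2; omega
  · have := (fval_low ℓ n hℓ hℓn hdvd g i s hs).1; omega

/-- the assignment built from a group function `g` -/
def buildF (ℓ n : ℕ) (hℓ : 2 < ℓ) (hℓn : ℓ ≤ n) (hdvd : ℓ ∣ n)
    (g : Fin n → Fin (n / ℓ)) (e : Fin n × Fin ℓ) : Fin n :=
  ⟨fval ℓ n g e, fval_lt ℓ n hℓ hℓn hdvd g e⟩

lemma buildF_valid (ℓ n : ℕ) (hℓ : 2 < ℓ) (hℓn : ℓ ≤ n) (hdvd : ℓ ∣ n)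
    (g : Fin n → Fin (n / ℓ))
    (hcard : ∀ t, (univ.filter (fun i => g i = t)).card = ℓ) :
    ValidAssign n ℓ n ℓ (buildF ℓ n hℓ hℓn hdvd g) := by
  obtain ⟨hq, hp, hle, hnq⟩ := nq_facts ℓ n hℓ hℓn hdvd
  constructor
  · intro j
    by_cases hj : n - n / ℓ ≤ (j : ℕ)
    · -- big reviewer
      have htb : (j : ℕ) - (n - n / ℓ) < n / ℓ := by have := j.2; omega
      set t : Fin (n / ℓ) := ⟨(j : ℕ) - (n - n / ℓ), htb⟩ with htdef
      let eT := (univ.filter (fun i => g i = t)).equivFinOfCardEq (hcard t)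
      apply Finset.card_eq_of_bijective
        (fun c hc => (((eT.symm ⟨c, hc⟩ : Fin n)), (⟨0, by omega⟩ : Fin ℓ)))
      · rintro ⟨i, s⟩ he
        rw [Finset.mem_filter] at he
        have hfe : fval ℓ n g (i, s) = (j : ℕ) := congrArg Fin.val he.2
        by_cases hs : (s : ℕ) = 0
        · rw [fval_high ℓ n g i s hs] at hfe
          have hgi : g i = t := by
            apply Fin.ext; rw [htdef]; simp only []; omega
          have hiG : i ∈ univ.filter (fun i => g i = t) :=
            Finset.mem_filter.mpr ⟨Finset.mem_univ _, hgi⟩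
          refine ⟨(eT ⟨i, hiG⟩ : ℕ), (eT ⟨i, hiG⟩).2, ?_⟩
          have h5 : eT.symm ⟨(eT ⟨i, hiG⟩ : ℕ), (eT ⟨i, hiG⟩).2⟩ = ⟨i, hiG⟩ := by
            rw [show (⟨(eT ⟨i, hiG⟩ : ℕ), (eT ⟨i, hiG⟩).2⟩ : Fin ℓ) = eT ⟨i, hiG⟩ from rfl]
            exact eT.symm_apply_apply _
          rw [h5]
          have hs0 : s = (⟨0, by omega⟩ : Fin ℓ) := Fin.ext hs
          rw [hs0]
        · exfalso
          have h1 := (fval_low ℓ n hℓ hℓn hdvd g i s hs).1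
          omega
      · intro c hc
        rw [Finset.mem_filter]
        refine ⟨Finset.mem_univ _, ?_⟩
        have hmem := (eT.symm ⟨c, hc⟩).2
        rw [Finset.mem_filter] at hmem
        apply Fin.ext
        have key : fval ℓ n g ((eT.symm ⟨c, hc⟩ : Fin n), (⟨0, by omega⟩ : Fin ℓ)) = (j : ℕ) := by
          rw [fval_high ℓ n g _ _ rfl, hmem.2, htdef]
          simp only [Fin.val_mk]; omega
        exact key
      · intro c c' hc hc' hcc
        have h6 : eT.symm ⟨c, hc⟩ = eT.symm ⟨c', hc'⟩ := Subtype.ext (congrArg Prod.fst hcc)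
        have := eT.symm.injective h6
        exact Fin.mk.inj_iff.mp this
    · -- small reviewer
      push_neg at hj
      have hur : (ℓ - 1) * ((j : ℕ) / (ℓ - 1)) + (j : ℕ) % (ℓ - 1) = (j : ℕ) :=
        Nat.div_add_mod _ _
      have hrb : (j : ℕ) % (ℓ - 1) < ℓ - 1 := Nat.mod_lt _ (by omega)
      have huq : (j : ℕ) / (ℓ - 1) < n / ℓ := by
        apply (Nat.div_lt_iff_lt_mul (by omega : 0 < ℓ - 1)).mpr
        rw [hnq]; omega
      apply Finset.card_eq_of_bijective
        (fun c hc => ((⟨((j : ℕ) / (ℓ - 1)) * ℓ + c, by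
            have h7 : ((j : ℕ) / (ℓ - 1) + 1) * ℓ ≤ (n / ℓ) * ℓ :=
              Nat.mul_le_mul_right _ (by omega)
            rw [hq] at h7
            have h8 : ((j : ℕ) / (ℓ - 1) + 1) * ℓ = ((j : ℕ) / (ℓ - 1)) * ℓ + ℓ := by ring
            omega⟩ : Fin n), (⟨(j : ℕ) % (ℓ - 1) + 1, by omega⟩ : Fin ℓ)))
      · rintro ⟨i, s⟩ he
        rw [Finset.mem_filter] at he
        have hfe : fval ℓ n g (i, s) = (j : ℕ) := congrArg Fin.val he.2
        by_cases hs : (s : ℕ) = 0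
        · exfalso
          rw [fval_high ℓ n g i s hs] at hfe; omega
        · have h1 := (fval_low ℓ n hℓ hℓn hdvd g i s hs).2
          rw [h1] at hfe
          have hs' : (s : ℕ) - 1 < ℓ - 1 := by have := s.2; omega
          have hiu : (i : ℕ) / ℓ = (j : ℕ) / (ℓ - 1) := by
            rw [← hfe, Nat.mul_comm ((i : ℕ) / ℓ) (ℓ - 1),
              Nat.mul_add_div (by omega : 0 < ℓ - 1), Nat.div_eq_of_lt hs']
            omega
          have hfe2 : (ℓ - 1) * ((j : ℕ) / (ℓ - 1)) + ((s : ℕ) - 1) = (j : ℕ) := by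
            rw [← hiu, Nat.mul_comm]; exact hfe
          have hsr : (s : ℕ) - 1 = (j : ℕ) % (ℓ - 1) := by omega
          refine ⟨(i : ℕ) % ℓ, Nat.mod_lt _ (by omega), ?_⟩
          have hieq : ((j : ℕ) / (ℓ - 1)) * ℓ + (i : ℕ) % ℓ = (i : ℕ) := by
            have h9 := Nat.div_add_mod ((i : ℕ)) ℓ
            rw [← hiu, Nat.mul_comm]; omega
          have hse : (s : ℕ) = (j : ℕ) % (ℓ - 1) + 1 := by omega
          exact Prod.ext (Fin.ext (by simpa using hieq)) (Fin.ext (by simp [hse]))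
      · intro c hc
        rw [Finset.mem_filter]
        refine ⟨Finset.mem_univ _, ?_⟩
        apply Fin.ext
        have hcn : ((j : ℕ) / (ℓ - 1)) * ℓ + c < n := by
          have h7 : ((j : ℕ) / (ℓ - 1) + 1) * ℓ ≤ (n / ℓ) * ℓ := Nat.mul_le_mul_right _ (by omega)
          rw [hq] at h7
          have h8 : ((j : ℕ) / (ℓ - 1) + 1) * ℓ = ((j : ℕ) / (ℓ - 1)) * ℓ + ℓ := by ring
          omega
        have hne : (((⟨(j : ℕ) % (ℓ - 1) + 1, by omega⟩ : Fin ℓ)) : ℕ) ≠ 0 := by simp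
        have key : fval ℓ n g ((⟨((j : ℕ) / (ℓ - 1)) * ℓ + c, hcn⟩ : Fin n),
            (⟨(j : ℕ) % (ℓ - 1) + 1, by omega⟩ : Fin ℓ)) = (j : ℕ) := by
          rw [(fval_low ℓ n hℓ hℓn hdvd g _ _ hne).2]
          simp only [Fin.val_mk]
          have hdiv : (((j : ℕ) / (ℓ - 1)) * ℓ + c) / ℓ = (j : ℕ) / (ℓ - 1) := by
            rw [Nat.mul_comm ((j : ℕ) / (ℓ - 1)) ℓ, Nat.mul_add_div (by omega : 0 < ℓ),
              Nat.div_eq_of_lt hc]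
            omega
          rw [hdiv, Nat.mul_comm ((j : ℕ) / (ℓ - 1)) (ℓ - 1)]
          omega
        exact key
      · intro c c' hc hc' hcc
        have := congrArg (fun p : Fin n × Fin ℓ => (p.1 : ℕ)) hcc
        simp only [] at this
        omega
  · intro i s s' hss
    have hv : fval ℓ n g (i, s) = fval ℓ n g (i, s') := congrArg Fin.val hss
    by_cases hs : (s : ℕ) = 0 <;> by_cases hs' : (s' : ℕ) = 0
    · exact Fin.ext (by omega)
    · exfalso
      have h1 := fval_high ℓ n g i s hs
      have h2 := (fval_low ℓ n hℓ hℓn hdvd g i s' hs').1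
      obtain ⟨hq, hp, hle, hnq⟩ := nq_facts ℓ n hℓ hℓn hdvd
      omega
    · exfalso
      have h1 := fval_high ℓ n g i s' hs'
      have h2 := (fval_low ℓ n hℓ hℓn hdvd g i s hs).1
      obtain ⟨hq, hp, hle, hnq⟩ := nq_facts ℓ n hℓ hℓn hdvd
      omega
    · have h1 := (fval_low ℓ n hℓ hℓn hdvd g i s hs).2
      have h2 := (fval_low ℓ n hℓ hℓn hdvd g i s' hs').2
      apply Fin.ext
      have hsb := s.2; have hsb' := s'.2
      omega



lemma mean_eq (n ℓ : ℕ) (hℓ : 0 < ℓ) (w : Fin n → ℝ) (f : Fin n × Fin ℓ → Fin n) (j : Fin n) :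
    meanWeight n ℓ n ℓ (fun e => if (e.2 : ℕ) = 0 then w e.1 else 0) f j
      = (1 / (ℓ : ℝ)) * ∑ i ∈ univ.filter (fun i : Fin n => f (i, ⟨0, hℓ⟩) = j), w i := by
  unfold meanWeight
  congr 1
  rw [Finset.sum_filter, Finset.sum_filter, Fintype.sum_prod_type]
  refine Finset.sum_congr rfl fun i _ => ?_
  rw [Finset.sum_eq_single (⟨0, hℓ⟩ : Fin ℓ)]
  · simp
  · intro s _ hs
    have : (s : ℕ) ≠ 0 := fun h => hs (Fin.ext h)
    simp [this]
  · simp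

lemma sum_means (n ℓ : ℕ) (hℓ : 0 < ℓ) (w : Fin n → ℝ) (f : Fin n × Fin ℓ → Fin n) :
    ∑ j : Fin n, meanWeight n ℓ n ℓ (fun e => if (e.2 : ℕ) = 0 then w e.1 else 0) f j
      = (1 / (ℓ : ℝ)) * ∑ i, w i := by
  unfold meanWeight
  rw [← Finset.mul_sum]
  congr 1
  rw [Finset.sum_fiberwise_eq_sum_filter]
  · simp only [Finset.mem_univ, Finset.filter_true]
    rw [Fintype.sum_prod_type]
    refine Finset.sum_congr rfl fun i _ => ?_
    rw [Finset.sum_eq_single (⟨0, hℓ⟩ : Fin ℓ)]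
    · simp
    · intro s _ hs
      have : (s : ℕ) ≠ 0 := fun h => hs (Fin.ext h)
      simp [this]
    · simp


lemma map_val_eq_sum_singleton {α : Type*} (s : Finset α) (w : α → ℝ) :
    Multiset.map w s.val = ∑ i ∈ s, ({w i} : Multiset ℝ) := by
  induction s using Finset.cons_induction with
  | empty => simp
  | cons a s ha ih => simp [Finset.sum_cons, ← ih]

lemma multiset_lift_add {α β : Type*} (f : α → β) (B : Multiset β) :
    ∀ (s : Multiset α) (C : Multiset β), Multiset.map f s = B + C →
    ∃ u v : Multiset α, s = u + v ∧ Multiset.map f u = B ∧ Multiset.map f v = C := by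
  induction B using Multiset.induction with
  | empty => intro s C h; exact ⟨0, s, by simp, by simp, by simpa using h⟩
  | cons b B ih =>
    intro s C h
    have hb : b ∈ Multiset.map f s := by rw [h]; simp
    obtain ⟨x, hx, hfx⟩ := Multiset.mem_map.mp hb
    obtain ⟨s', rfl⟩ := Multiset.exists_cons_of_mem hx
    have h' : Multiset.map f s' = B + C := by
      have : b ::ₘ Multiset.map f s' = b ::ₘ (B + C) := by
        simpa [hfx] using h
      exact (Multiset.cons_inj_right b).mp this
    obtain ⟨u, v, h1, h2, h3⟩ := ih s' C h'
    exact ⟨x ::ₘ u, v, by simp [h1], by simp [h2, hfx], h3⟩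

lemma multiset_lift_sum {α β ι : Type*} [DecidableEq ι] (f : α → β) (P : ι → Multiset β) :
    ∀ (I : Finset ι) (s : Multiset α), Multiset.map f s = ∑ t ∈ I, P t →
    ∃ Q : ι → Multiset α, s = ∑ t ∈ I, Q t ∧ ∀ t ∈ I, Multiset.map f (Q t) = P t := by
  intro I
  induction I using Finset.cons_induction with
  | empty => intro s h; exact ⟨fun _ => 0, by simpa using h, by simp⟩
  | cons a I ha ih =>
    intro s h
    rw [Finset.sum_cons] at h
    obtain ⟨u, v, rfl, hu, hv⟩ := multiset_lift_add f _ s _ h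
    obtain ⟨Q, hQ1, hQ2⟩ := ih v hv
    refine ⟨fun t => if t = a then u else Q t, ?_, ?_⟩
    · rw [Finset.sum_cons, hQ1]
      simp only [if_pos rfl]
      congr 1
      exact Finset.sum_congr rfl (fun t ht => by rw [if_neg]; rintro rfl; exact ha ht)
    · intro t ht
      rcases Finset.mem_cons.mp ht with rfl | ht'
      · simpa using hu
      · simp only []
        rw [if_neg (by rintro rfl; exact ha ht')]; exact hQ2 t ht'

lemma buildF_mean (ℓ n : ℕ) (hℓ : 2 < ℓ) (hℓn : ℓ ≤ n) (hdvd : ℓ ∣ n)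
    (w : Fin n → ℝ) (a : ℝ) (g : Fin n → Fin (n / ℓ))
    (hsum : ∀ t, ∑ i ∈ univ.filter (fun i => g i = t), w i = (ℓ : ℝ) * a) (j : Fin n) :
    meanWeight n ℓ n ℓ (fun e => if (e.2 : ℕ) = 0 then w e.1 else 0)
      (buildF ℓ n hℓ hℓn hdvd g) j = if (j : ℕ) < n - n / ℓ then 0 else a := by
  obtain ⟨hq, hp, hle, hnq⟩ := nq_facts ℓ n hℓ hℓn hdvd
  rw [mean_eq n ℓ (by omega) w _ j]
  by_cases hj : (j : ℕ) < n - n / ℓ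
  · rw [if_pos hj]
    have hempty : univ.filter (fun i : Fin n =>
        buildF ℓ n hℓ hℓn hdvd g (i, ⟨0, by omega⟩) = j) = ∅ := by
      apply Finset.filter_eq_empty_iff.mpr
      intro i _
      intro hcon
      have : fval ℓ n g (i, ⟨0, by omega⟩) = (j : ℕ) := congrArg Fin.val hcon
      rw [fval_high ℓ n g _ _ rfl] at this
      omega
    rw [hempty]
    simp
  · rw [if_neg hj]
    push_neg at hj
    have htb : (j : ℕ) - (n - n / ℓ) < n / ℓ := by have := j.2; omega
    have hfilter : univ.filter (fun i : Fin n =>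
        buildF ℓ n hℓ hℓn hdvd g (i, ⟨0, by omega⟩) = j)
        = univ.filter (fun i : Fin n => g i = ⟨(j : ℕ) - (n - n / ℓ), htb⟩) := by
      apply Finset.filter_congr
      intro i _
      constructor
      · intro hcon
        have h1 : fval ℓ n g (i, ⟨0, by omega⟩) = (j : ℕ) := congrArg Fin.val hcon
        rw [fval_high ℓ n g _ _ rfl] at h1
        apply Fin.ext
        simp only [Fin.val_mk]
        omega
      · intro hgi
        have key : fval ℓ n g (i, (⟨0, by omega⟩ : Fin ℓ)) = (j : ℕ) := by
          rw [fval_high ℓ n g _ _ rfl, hgi]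
          simp only [Fin.val_mk]
          omega
        exact Fin.ext key
    rw [hfilter, hsum]
    have : (ℓ : ℝ) ≠ 0 := by positivity
    field_simp


lemma partition_to_mem (ℓ n : ℕ) (hℓ : 2 < ℓ) (hℓn : ℓ ≤ n) (hdvd : ℓ ∣ n)
    (w : Fin n → ℝ) (a : ℝ) (ha0 : 0 ≤ a)
    (P : Fin (n / ℓ) → Multiset ℝ)
    (hPcard : ∀ t, (P t).card = ℓ)
    (hPsum : ∀ t, (P t).sum = (ℓ : ℝ) * a)
    (hPall : ∑ t : Fin (n / ℓ), P t = Multiset.map w (Finset.univ : Finset (Fin n)).val) :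
    (fun i : Fin n => if (i : ℕ) < n - n / ℓ then (0 : ℝ) else a)
      ∈ sortedMeanVecSet n ℓ n ℓ (fun e => if (e.2 : ℕ) = 0 then w e.1 else 0) := by
  classical
  obtain ⟨Q, hQsum, hQmap⟩ := multiset_lift_sum w P Finset.univ
    (Finset.univ : Finset (Fin n)).val hPall.symm
  have hex : ∀ i : Fin n, ∃ t, i ∈ Q t := by
    intro i
    have : i ∈ (Finset.univ : Finset (Fin n)).val := Finset.mem_univ_val i
    rw [hQsum] at this
    obtain ⟨t, _, ht⟩ := Multiset.mem_sum.mp this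
    exact ⟨t, ht⟩
  set g : Fin n → Fin (n / ℓ) := fun i => Classical.choose (hex i) with hg
  have hgmem : ∀ i, i ∈ Q (g i) := fun i => Classical.choose_spec (hex i)
  have huniq : ∀ i t, i ∈ Q t → g i = t := by
    intro i t hit
    by_contra hne
    have h1 : Multiset.count i (Finset.univ : Finset (Fin n)).val = 1 :=
      Multiset.count_eq_one_of_mem Finset.univ.nodup (Finset.mem_univ_val i)
    rw [hQsum, Multiset.count_sum'] at h1
    have h2 : ∑ u ∈ ({g i, t} : Finset (Fin (n / ℓ))), Multiset.count i (Q u)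
        ≤ ∑ u : Fin (n / ℓ), Multiset.count i (Q u) :=
      Finset.sum_le_sum_of_subset (Finset.subset_univ _)
    rw [Finset.sum_pair hne] at h2
    have h3 : 1 ≤ Multiset.count i (Q (g i)) := Multiset.one_le_count_iff_mem.mpr (hgmem i)
    have h4 : 1 ≤ Multiset.count i (Q t) := Multiset.one_le_count_iff_mem.mpr hit
    omega
  have hSval : ∀ t, (Finset.univ.filter (fun i => g i = t)).val = Q t := by
    intro t
    have hle : Q t ≤ (Finset.univ : Finset (Fin n)).val := by
      rw [hQsum, ← Finset.add_sum_erase _ _ (Finset.mem_univ t)]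
      exact Multiset.le_add_right _ _
    refine (Multiset.Nodup.ext (Finset.univ.filter (fun i => g i = t)).nodup
      (Multiset.nodup_of_le hle Finset.univ.nodup)).mpr ?_
    intro i
    rw [← Finset.mem_def, Finset.mem_filter]
    constructor
    · rintro ⟨_, rfl⟩; exact hgmem i
    · intro hi; exact ⟨Finset.mem_univ _, huniq i t hi⟩
  have hcard : ∀ t, (Finset.univ.filter (fun i => g i = t)).card = ℓ := by
    intro t
    rw [Finset.card_def, hSval t]
    have := congrArg Multiset.card (hQmap t (Finset.mem_univ t))
    rw [Multiset.card_map] at this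
    rw [this, hPcard t]
  have hsum : ∀ t, ∑ i ∈ Finset.univ.filter (fun i => g i = t), w i = (ℓ : ℝ) * a := by
    intro t
    rw [Finset.sum_eq_multiset_sum, hSval t, hQmap t (Finset.mem_univ t), hPsum t]
  refine ⟨?_, buildF ℓ n hℓ hℓn hdvd g, buildF_valid ℓ n hℓ hℓn hdvd g hcard, ?_⟩
  · intro i j hij
    simp only []
    by_cases h2 : (j : ℕ) < n - n / ℓ
    · rw [if_pos h2, if_pos (lt_of_le_of_lt (Fin.le_def.mp hij) h2)]
    · rw [if_neg h2]
      split_ifs with h1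
      · exact ha0
      · exact le_refl _
  · exact Multiset.map_congr rfl fun j _ =>
      (buildF_mean ℓ n hℓ hℓn hdvd w a g hsum j).symm
lemma card_filter_lt_val (n m : ℕ) (hm : m < n) :
    (Finset.univ.filter (fun j : Fin n => (j : ℕ) < m)).card = m := by
  have : Finset.univ.filter (fun j : Fin n => (j : ℕ) < m) = Finset.Iio (⟨m, hm⟩ : Fin n) := by
    ext j
    simp [Finset.mem_Iio, Fin.lt_def]
  rw [this, Fin.card_Iio]

lemma sum_replicate_zero {ι : Type*} (s : Finset ι) (c : ι → ℕ) :
    ∑ t ∈ s, Multiset.replicate (c t) (0 : ℝ) = Multiset.replicate (∑ t ∈ s, c t) 0 := by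
  induction s using Finset.cons_induction with
  | empty => simp
  | cons a s ha ih => rw [Finset.sum_cons, Finset.sum_cons, ih, Multiset.replicate_add]

lemma card_finset_sum {ι α : Type*} (s : Finset ι) (f : ι → Multiset α) :
    Multiset.card (∑ t ∈ s, f t) = ∑ t ∈ s, Multiset.card (f t) := by
  induction s using Finset.cons_induction with
  | empty => simp
  | cons a s ha ih => rw [Finset.sum_cons, Finset.sum_cons, Multiset.card_add, ih]

lemma theta_nonneg (ℓ n : ℕ) (hℓ : 2 < ℓ) (w : Fin n → ℝ) (hw : ∀ i, 0 ≤ w i)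
    (θ : Fin n → ℝ)
    (hθ : θ ∈ sortedMeanVecSet n ℓ n ℓ (fun e => if (e.2 : ℕ) = 0 then w e.1 else 0))
    (j : Fin n) : 0 ≤ θ j := by
  obtain ⟨hmono, f, hf, hmap⟩ := hθ
  have hmem : θ j ∈ Multiset.map θ (Finset.univ : Finset (Fin n)).val :=
    Multiset.mem_map_of_mem θ (Finset.mem_univ_val j)
  rw [hmap] at hmem
  obtain ⟨j', _, hj'⟩ := Multiset.mem_map.mp hmem
  rw [← hj']
  unfold meanWeight
  apply mul_nonneg (by positivity)
  apply Finset.sum_nonneg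
  intro e _
  split_ifs
  · exact hw _
  · exact le_refl 0

lemma theta_sum (ℓ n : ℕ) (hℓ : 2 < ℓ) (w : Fin n → ℝ)
    (θ : Fin n → ℝ)
    (hθ : θ ∈ sortedMeanVecSet n ℓ n ℓ (fun e => if (e.2 : ℕ) = 0 then w e.1 else 0)) :
    ∑ j, θ j = (1 / (ℓ : ℝ)) * ∑ i, w i := by
  obtain ⟨hmono, f, hf, hmap⟩ := hθ
  have h1 : ∑ j, θ j = (Multiset.map θ (Finset.univ : Finset (Fin n)).val).sum :=
    Finset.sum_eq_multiset_sum _ _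
  rw [h1, hmap, ← Finset.sum_eq_multiset_sum]
  exact sum_means n ℓ (by omega) w f
lemma conv_pin (ℓ n : ℕ) (hℓ : 2 < ℓ) (hℓn : ℓ ≤ n) (hdvd : ℓ ∣ n)
    (w : Fin n → ℝ) (hw : ∀ i, 0 ≤ w i)
    (a : ℝ) (ha : a = (1 / (n : ℝ)) * ∑ i, w i)
    (hconv : (fun i : Fin n => if (i : ℕ) < n - n / ℓ then (0 : ℝ) else a)
      ∈ convexHull ℝ (sortedMeanVecSet n ℓ n ℓ (fun e => if (e.2 : ℕ) = 0 then w e.1 else 0))) :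
    (fun i : Fin n => if (i : ℕ) < n - n / ℓ then (0 : ℝ) else a)
      ∈ sortedMeanVecSet n ℓ n ℓ (fun e => if (e.2 : ℕ) = 0 then w e.1 else 0) := by
  classical
  obtain ⟨hq, hp, hle, hnq⟩ := nq_facts ℓ n hℓ hℓn hdvd
  have hn0 : 0 < n := by omega
  set v : Fin n → ℝ := fun i : Fin n => if (i : ℕ) < n - n / ℓ then (0 : ℝ) else a with hvdef
  set Θ := sortedMeanVecSet n ℓ n ℓ (fun e : Fin n × Fin ℓ =>
    if (e.2 : ℕ) = 0 then w e.1 else 0) with hΘ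
  set A : Finset (Fin n) := Finset.univ.filter (fun j : Fin n => (j : ℕ) < n - n / ℓ) with hA
  set B : Finset (Fin n) := Finset.univ.filter (fun j : Fin n => ¬ ((j : ℕ) < n - n / ℓ)) with hB
  have hcardA : A.card = n - n / ℓ := card_filter_lt_val n (n - n / ℓ) (by omega)
  have hcardAB : A.card + B.card = n := by
    rw [hA, hB]
    rw [Finset.card_filter_add_card_filter_not]
    simp
  have hcardB : B.card = n / ℓ := by omega
  set lastIdx : Fin n := ⟨n - 1, by omega⟩ with hlast
  have hlastB : ¬ ((lastIdx : ℕ) < n - n / ℓ) := by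
    simp only [hlast, Fin.val_mk]; omega
  set G : (Fin n → ℝ) → ℝ := fun θ =>
    (∑ j ∈ A, θ j) + (∑ j ∈ B, (θ lastIdx - θ j)) with hG
  -- value of v on A and B
  have hvA : ∀ j ∈ A, v j = 0 := by
    intro j hj; rw [hA, Finset.mem_filter] at hj; simp only [hvdef, if_pos hj.2]
  have hvB : ∀ j ∈ B, v j = a := by
    intro j hj; rw [hB, Finset.mem_filter] at hj; simp only [hvdef, if_neg hj.2]
  have hvlast : v lastIdx = a := by simp only [hvdef, if_neg hlastB]
  have hGv : G v = 0 := by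
    rw [hG]
    simp only []
    rw [Finset.sum_congr rfl hvA, Finset.sum_congr rfl
      (fun j hj => by rw [hvlast, hvB j hj]; exact sub_self a : ∀ j ∈ B, v lastIdx - v j = 0)]
    simp
  have hGnonneg : ∀ θ ∈ Θ, 0 ≤ G θ := by
    intro θ hθ
    apply add_nonneg
    · exact Finset.sum_nonneg fun j _ => theta_nonneg ℓ n hℓ w hw θ hθ j
    · apply Finset.sum_nonneg
      intro j _
      have hmono := hθ.1
      have : θ j ≤ θ lastIdx := hmono (Fin.le_def.mpr (by have := j.2; simp only [hlast]; omega))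
      linarith
  have hsumθ : ∀ θ ∈ Θ, ∑ j, θ j = ((n / ℓ : ℕ) : ℝ) * a := by
    intro θ hθ
    rw [theta_sum ℓ n hℓ w θ hθ]
    have hcast : ((n / ℓ : ℕ) : ℝ) * (ℓ : ℝ) = (n : ℝ) := by exact_mod_cast congrArg Nat.cast hq
    have hℓ0 : (ℓ : ℝ) ≠ 0 := by positivity
    have hn0' : (n : ℝ) ≠ 0 := by positivity
    rw [ha]
    field_simp
    rw [← hcast]; ring
  have hGzero : ∀ θ ∈ Θ, G θ = 0 → θ = v := by
    intro θ hθ hGθ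
    have h1 : 0 ≤ ∑ j ∈ A, θ j := Finset.sum_nonneg fun j _ => theta_nonneg ℓ n hℓ w hw θ hθ j
    have h2 : 0 ≤ ∑ j ∈ B, (θ lastIdx - θ j) := by
      apply Finset.sum_nonneg
      intro j _
      have : θ j ≤ θ lastIdx := hθ.1 (Fin.le_def.mpr (by have := j.2; simp only [hlast]; omega))
      linarith
    rw [hG] at hGθ; simp only [] at hGθ
    have hA0 : ∑ j ∈ A, θ j = 0 := by linarith
    have hB0 : ∑ j ∈ B, (θ lastIdx - θ j) = 0 := by linarith
    have hAterm : ∀ j ∈ A, θ j = 0 := by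
      intro j hj
      exact (Finset.sum_eq_zero_iff_of_nonneg
        (fun j _ => theta_nonneg ℓ n hℓ w hw θ hθ j)).mp hA0 j hj
    have hBterm : ∀ j ∈ B, θ j = θ lastIdx := by
      intro j hj
      have := (Finset.sum_eq_zero_iff_of_nonneg
        (fun j _ => by
          have : θ j ≤ θ lastIdx := hθ.1 (Fin.le_def.mpr (by have := j.2; simp only [hlast]; omega))
          linarith)).mp hB0 j hj
      linarith
    -- compute θ lastIdx = a
    have hsplit : ∑ j, θ j = (∑ j ∈ A, θ j) + (∑ j ∈ B, θ j) := by
      rw [hA, hB]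
      exact (Finset.sum_filter_add_sum_filter_not _ _ _).symm
    have hBsum : ∑ j ∈ B, θ j = ((n / ℓ : ℕ) : ℝ) * θ lastIdx := by
      rw [Finset.sum_congr rfl hBterm, Finset.sum_const, hcardB, nsmul_eq_mul]
    have hq0 : ((n / ℓ : ℕ) : ℝ) ≠ 0 := by positivity
    have hlasta : θ lastIdx = a := by
      have hts := hsumθ θ hθ
      rw [hsplit, hA0, hBsum] at hts
      exact mul_left_cancel₀ hq0 (by linarith)
    funext j
    by_cases hj : (j : ℕ) < n - n / ℓ
    · rw [hAterm j (by rw [hA, Finset.mem_filter]; exact ⟨Finset.mem_univ _, hj⟩)]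
      simp only [hvdef, if_pos hj]
    · rw [hBterm j (by rw [hB, Finset.mem_filter]; exact ⟨Finset.mem_univ _, hj⟩), hlasta]
      simp only [hvdef, if_neg hj]
  -- now the convex combination
  rw [_root_.convexHull_eq] at hconv
  obtain ⟨ι, t, lam, z, hl0, hl1, hzΘ, hcm⟩ := hconv
  rw [Finset.centerMass_eq_of_sum_1 _ _ hl1] at hcm
  have hcoord : ∀ j, v j = ∑ k ∈ t, lam k * z k j := by
    intro j
    have := congrFun hcm j
    rw [← this]
    simp [Finset.sum_apply]
  have hGlin : ∑ k ∈ t, lam k * G (z k) = G v := by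
    rw [hG]
    simp only []
    calc ∑ k ∈ t, lam k * ((∑ j ∈ A, z k j) + (∑ j ∈ B, (z k lastIdx - z k j)))
        = ∑ k ∈ t, ((∑ j ∈ A, lam k * z k j)
            + (∑ j ∈ B, (lam k * z k lastIdx - lam k * z k j))) := by
          refine Finset.sum_congr rfl fun k _ => ?_
          rw [mul_add, Finset.mul_sum, Finset.mul_sum]
          congr 1
          exact Finset.sum_congr rfl fun j _ => by ring
      _ = (∑ j ∈ A, ∑ k ∈ t, lam k * z k j)
            + (∑ j ∈ B, (∑ k ∈ t, lam k * z k lastIdx - ∑ k ∈ t, lam k * z k j)) := by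
          rw [Finset.sum_add_distrib]
          congr 1
          · exact Finset.sum_comm
          · rw [Finset.sum_comm]
            exact Finset.sum_congr rfl fun j _ => Finset.sum_sub_distrib _ _
      _ = (∑ j ∈ A, v j) + (∑ j ∈ B, (v lastIdx - v j)) := by
          congr 1
          · exact Finset.sum_congr rfl fun j _ => (hcoord j).symm
          · exact Finset.sum_congr rfl fun j _ => by rw [← hcoord, ← hcoord]
  have hterms : ∀ k ∈ t, lam k * G (z k) = 0 := by
    have hGv' : ∑ k ∈ t, lam k * G (z k) = 0 := by rw [hGlin, hGv]
    exact (Finset.sum_eq_zero_iff_of_nonneg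
      (fun k hk => mul_nonneg (hl0 k hk) (hGnonneg (z k) (hzΘ k hk)))).mp hGv'
  have hex : ∃ k ∈ t, lam k ≠ 0 := by
    by_contra hcon
    push_neg at hcon
    rw [Finset.sum_eq_zero hcon] at hl1
    exact one_ne_zero hl1.symm
  obtain ⟨k, hk, hkne⟩ := hex
  have hGzk : G (z k) = 0 := by
    have := hterms k hk
    rcases mul_eq_zero.mp this with h | h
    · exact absurd h hkne
    · exact h
  have := hGzero (z k) (hzΘ k hk) hGzk
  rw [← this]
  exact hzΘ k hk
lemma mem_to_partition (ℓ n : ℕ) (hℓ : 2 < ℓ) (hℓn : ℓ ≤ n) (hdvd : ℓ ∣ n)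
    (w : Fin n → ℝ) (hw : ∀ i, 0 ≤ w i)
    (a : ℝ) (ha : a = (1 / (n : ℝ)) * ∑ i, w i)
    (hv : (fun i : Fin n => if (i : ℕ) < n - n / ℓ then (0 : ℝ) else a)
      ∈ sortedMeanVecSet n ℓ n ℓ (fun e => if (e.2 : ℕ) = 0 then w e.1 else 0)) :
    ∃ P : Fin (n / ℓ) → Multiset ℝ,
      (∀ t, (P t).card = ℓ) ∧
      (∀ t, (P t).sum = (ℓ : ℝ) * a) ∧
      ∑ t : Fin (n / ℓ), P t = Multiset.map w (Finset.univ : Finset (Fin n)).val := by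
  classical
  obtain ⟨hq, hp, hle, hnq⟩ := nq_facts ℓ n hℓ hℓn hdvd
  have hn0 : 0 < n := by omega
  have hℓ0 : (0 : ℕ) < ℓ := by omega
  have hℓR : (ℓ : ℝ) ≠ 0 := by positivity
  by_cases ha0 : a = 0
  · -- trivial case: all weights are zero
    have hsw : ∑ i, w i = 0 := by
      have hn0' : (n : ℝ) ≠ 0 := by positivity
      rw [ha0] at ha
      field_simp at ha
      linarith [ha]
    have hwz : ∀ i, w i = 0 := fun i =>
      (Finset.sum_eq_zero_iff_of_nonneg (fun i _ => hw i)).mp hsw i (Finset.mem_univ i)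
    refine ⟨fun _ => Multiset.replicate ℓ (0 : ℝ), ?_, ?_, ?_⟩
    · intro t; simp
    · intro t; simp [ha0]
    · rw [sum_replicate_zero]
      have hcnt : ∑ _t : Fin (n / ℓ), ℓ = n := by
        rw [Finset.sum_const, Finset.card_univ, Fintype.card_fin, smul_eq_mul, hq]
      rw [hcnt]
      symm
      rw [Multiset.eq_replicate]
      constructor
      · rw [Multiset.card_map]
        simp [Finset.card_univ]
      · intro b hb
        obtain ⟨i, _, rfl⟩ := Multiset.mem_map.mp hb
        exact hwz i
  · -- main case
    obtain ⟨hmono, f, hf, hmap⟩ := hv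
    set μ := meanWeight n ℓ n ℓ (fun e : Fin n × Fin ℓ =>
      if (e.2 : ℕ) = 0 then w e.1 else 0) f with hμ
    set T : Fin n → Finset (Fin n) :=
      fun j => Finset.univ.filter (fun i => f (i, ⟨0, hℓ0⟩) = j) with hT
    have hμT : ∀ j, μ j = (1 / (ℓ : ℝ)) * ∑ i ∈ T j, w i := fun j => mean_eq n ℓ hℓ0 w f j
    have hTcard : ∀ j, (T j).card ≤ ℓ := by
      intro j
      have himg : (T j).image (fun i => (i, (⟨0, hℓ0⟩ : Fin ℓ)))
          ⊆ Finset.univ.filter (fun e : Fin n × Fin ℓ => f e = j) := by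
        intro e he
        obtain ⟨i, hi, rfl⟩ := Finset.mem_image.mp he
        rw [hT, Finset.mem_filter] at hi
        exact Finset.mem_filter.mpr ⟨Finset.mem_univ _, hi.2⟩
      have hinj : Function.Injective (fun i : Fin n => (i, (⟨0, hℓ0⟩ : Fin ℓ))) := by
        intro x y hxy
        exact (Prod.mk.injEq _ _ _ _).mp hxy |>.1
      calc (T j).card = ((T j).image (fun i => (i, (⟨0, hℓ0⟩ : Fin ℓ)))).card :=
            (Finset.card_image_of_injective _ hinj).symm
        _ ≤ (Finset.univ.filter (fun e : Fin n × Fin ℓ => f e = j)).card :=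
            Finset.card_le_card himg
        _ = ℓ := hf.1 j
    have hTtotal : ∑ j, (T j).card = n := by
      rw [hT]
      have := Finset.card_eq_sum_card_fiberwise
        (f := fun i : Fin n => f (i, ⟨0, hℓ0⟩)) (s := Finset.univ) (t := Finset.univ)
        (fun i _ => Finset.mem_univ _)
      rw [← this, Finset.card_univ, Fintype.card_fin]
    have hμval : ∀ j, μ j = 0 ∨ μ j = a := by
      intro j
      have hmem : μ j ∈ Multiset.map μ (Finset.univ : Finset (Fin n)).val :=
        Multiset.mem_map_of_mem μ (Finset.mem_univ_val j)
      rw [← hmap] at hmem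
      obtain ⟨i, _, hi⟩ := Multiset.mem_map.mp hmem
      by_cases hlt : (i : ℕ) < n - n / ℓ
      · left; rw [← hi]; simp [hlt]
      · right; rw [← hi]; simp [hlt]
    set BigSet := Finset.univ.filter (fun j : Fin n => μ j ≠ 0) with hBS
    have hBig : ∀ j ∈ BigSet, μ j = a := by
      intro j hj
      rw [hBS, Finset.mem_filter] at hj
      rcases hμval j with h | h
      · exact absurd h hj.2
      · exact h
    have hSmall : ∀ j, j ∉ BigSet → μ j = 0 := by
      intro j hj
      rw [hBS, Finset.mem_filter] at hj
      push_neg at hj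
      exact hj (Finset.mem_univ _)
    have hBigcard : BigSet.card = n / ℓ := by
      have hcnt := congrArg (Multiset.countP (fun x : ℝ => x ≠ 0)) hmap
      rw [Multiset.countP_map, Multiset.countP_map] at hcnt
      have hL : ((Finset.univ : Finset (Fin n)).val.filter
          (fun j => (fun x : ℝ => x ≠ 0) ((fun i : Fin n =>
            if (i : ℕ) < n - n / ℓ then (0 : ℝ) else a) j))).card
          = (Finset.univ.filter (fun j : Fin n => ¬ ((j : ℕ) < n - n / ℓ))).card := by
        rw [Finset.card_def, Finset.filter_val]
        congr 1
        apply Multiset.filter_congr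
        intro j _
        by_cases hlt : (j : ℕ) < n - n / ℓ
        · simp [hlt]
        · simp [hlt, ha0]
      have hR : ((Finset.univ : Finset (Fin n)).val.filter
          (fun j => (fun x : ℝ => x ≠ 0) (μ j))).card = BigSet.card := by
        rw [hBS, Finset.card_def, Finset.filter_val]
      rw [hL, hR] at hcnt
      have hAB : (Finset.univ.filter (fun j : Fin n => (j : ℕ) < n - n / ℓ)).card
          + (Finset.univ.filter (fun j : Fin n => ¬ ((j : ℕ) < n - n / ℓ))).card = n := by
        have := Finset.card_filter_add_card_filter_not
          (s := (Finset.univ : Finset (Fin n))) (p := fun j : Fin n => (j : ℕ) < n - n / ℓ)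
        simpa using this
      have hcA := card_filter_lt_val n (n - n / ℓ) (by omega)
      omega
    have hBigsum : ∀ j ∈ BigSet, ∑ i ∈ T j, w i = (ℓ : ℝ) * a := by
      intro j hj
      have h1 := hμT j
      rw [hBig j hj] at h1
      field_simp at h1
      linarith
    have hSmallw : ∀ j, j ∉ BigSet → ∀ i ∈ T j, w i = 0 := by
      intro j hj
      have h1 := hμT j
      rw [hSmall j hj] at h1
      have h2 : ∑ i ∈ T j, w i = 0 := by
        field_simp at h1
        linarith
      exact fun i hi => (Finset.sum_eq_zero_iff_of_nonneg (fun i _ => hw i)).mp h2 i hi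
    set e := BigSet.equivFinOfCardEq hBigcard with he
    refine ⟨fun t => Multiset.map w (T ((e.symm t : { x // x ∈ BigSet }) : Fin n)).val
      + Multiset.replicate (ℓ - (T ((e.symm t : { x // x ∈ BigSet }) : Fin n)).card) 0,
      ?_, ?_, ?_⟩
    · intro t
      rw [Multiset.card_add, Multiset.card_map, Multiset.card_replicate, Finset.card_def]
      have := hTcard ((e.symm t : { x // x ∈ BigSet }) : Fin n)
      rw [Finset.card_def] at this
      omega
    · intro t
      rw [Multiset.sum_add, Multiset.sum_replicate, smul_zero, add_zero,
        ← Finset.sum_eq_multiset_sum]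
      exact hBigsum _ (e.symm t).2
    · -- total multiset
      have hfib : ∑ j, Multiset.map w (T j).val
          = Multiset.map w (Finset.univ : Finset (Fin n)).val := by
        have h1 : ∀ j, Multiset.map w (T j).val = ∑ i ∈ T j, ({w i} : Multiset ℝ) :=
          fun j => map_val_eq_sum_singleton _ w
        have h2 := Finset.sum_fiberwise_eq_sum_filter Finset.univ Finset.univ
          (fun i : Fin n => f (i, ⟨0, hℓ0⟩)) (fun i => ({w i} : Multiset ℝ))
        simp only [Finset.mem_univ, Finset.filter_true] at h2
        rw [Finset.sum_congr rfl (fun j _ => h1 j), hT]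
        rw [h2, map_val_eq_sum_singleton _ w]
      have hsplit := Finset.sum_filter_add_sum_filter_not Finset.univ
        (fun j : Fin n => μ j ≠ 0) (fun j => Multiset.map w (T j).val)
      have hreidx : ∑ t : Fin (n / ℓ), Multiset.map w
          (T ((e.symm t : { x // x ∈ BigSet }) : Fin n)).val
          = ∑ j ∈ BigSet, Multiset.map w (T j).val := by
        rw [Equiv.sum_comp e.symm (fun b : { x // x ∈ BigSet } =>
          Multiset.map w (T (b : Fin n)).val)]
        exact Finset.sum_coe_sort BigSet (fun j => Multiset.map w (T j).val)
      have hreidx2 : ∑ t : Fin (n / ℓ), (ℓ - (T ((e.symm t : { x // x ∈ BigSet }) : Fin n)).card)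
          = ∑ j ∈ BigSet, (ℓ - (T j).card) := by
        rw [Equiv.sum_comp e.symm (fun b : { x // x ∈ BigSet } => ℓ - (T (b : Fin n)).card)]
        exact Finset.sum_coe_sort BigSet (fun j => ℓ - (T j).card)
      have hScR : (∑ j ∈ BigSet, (T j).card)
          + (∑ j ∈ Finset.univ.filter (fun j : Fin n => ¬ μ j ≠ 0), (T j).card) = n :=
        (Finset.sum_filter_add_sum_filter_not Finset.univ (fun j : Fin n => μ j ≠ 0)
          (fun j => (T j).card)).trans hTtotal
      have hRcard : ∑ j ∈ BigSet, (ℓ - (T j).card)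
          = ∑ j ∈ Finset.univ.filter (fun j : Fin n => ¬ μ j ≠ 0), (T j).card := by
        have h3 : (∑ j ∈ BigSet, (ℓ - (T j).card)) + (∑ j ∈ BigSet, (T j).card)
            = BigSet.card * ℓ := by
          rw [← Finset.sum_add_distrib]
          rw [Finset.sum_congr rfl (fun j _ => by have := hTcard j; omega :
            ∀ j ∈ BigSet, (ℓ - (T j).card) + (T j).card = ℓ)]
          rw [Finset.sum_const, smul_eq_mul]
        rw [hBigcard] at h3
        omega
      have hzeropart : ∑ j ∈ Finset.univ.filter (fun j : Fin n => ¬ μ j ≠ 0),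
          Multiset.map w (T j).val
          = Multiset.replicate (∑ j ∈ Finset.univ.filter (fun j : Fin n => ¬ μ j ≠ 0),
              (T j).card) 0 := by
        rw [Multiset.eq_replicate]
        constructor
        · rw [card_finset_sum]
          exact Finset.sum_congr rfl fun j _ => by
            rw [Multiset.card_map, Finset.card_def]
        · intro b hb
          obtain ⟨j, hj, hbj⟩ := Multiset.mem_sum.mp hb
          obtain ⟨i, hi, rfl⟩ := Multiset.mem_map.mp hbj
          rw [Finset.mem_filter] at hj
          exact hSmallw j (fun hmem => hj.2 (Finset.mem_filter.mp hmem).2) i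
            (Finset.mem_def.mpr hi)
      show ∑ t : Fin (n / ℓ), (Multiset.map w (T ((e.symm t : { x // x ∈ BigSet }) : Fin n)).val
          + Multiset.replicate (ℓ - (T ((e.symm t : { x // x ∈ BigSet }) : Fin n)).card) 0)
          = Multiset.map w (Finset.univ : Finset (Fin n)).val
      rw [Finset.sum_add_distrib, hreidx, sum_replicate_zero, hreidx2, hRcard,
        ← hzeropart, hBS, ← hfib, ← hsplit]

end AuxForVInConvexHull

/-- Crux of the NP-hardness theorem: in the setting where paper `i` has one entry of value
`w i ≥ 0` and `ℓ - 1` zero entries, the vector `v = (0, …, 0, a, …, a)` (with `n/ℓ` trailing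
`a`'s, `a` the average of the `wᵢ`) lies in the convex hull of `Θ` if and only if the multiset
`{w₁, …, wₙ}` can be partitioned into `n/ℓ` sub-multisets each of cardinality `ℓ` and sum
`ℓ·a`. -/

theorem v_in_convexHull_iff_ell_partition
    (ℓ n : ℕ) (hℓ : 2 < ℓ) (hℓn : ℓ ≤ n) (hdvd : ℓ ∣ n)
    (w : Fin n → ℝ) (hw : ∀ i, 0 ≤ w i)
    (a : ℝ) (ha : a = (1 / (n : ℝ)) * ∑ i, w i) :
    (fun i : Fin n => if (i : ℕ) < n - n / ℓ then (0 : ℝ) else a)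
        ∈ convexHull ℝ
            (sortedMeanVecSet n ℓ n ℓ (fun e => if (e.2 : ℕ) = 0 then w e.1 else 0))
      ↔ ∃ P : Fin (n / ℓ) → Multiset ℝ,
          (∀ t, (P t).card = ℓ) ∧
          (∀ t, (P t).sum = (ℓ : ℝ) * a) ∧
          ∑ t : Fin (n / ℓ), P t = Multiset.map w (Finset.univ : Finset (Fin n)).val := by
  constructor
  · intro hconv
    exact mem_to_partition ℓ n hℓ hℓn hdvd w hw a ha
      (conv_pin ℓ n hℓ hℓn hdvd w hw a ha hconv)
  · rintro ⟨P, hPcard, hPsum, hPall⟩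
    have ha0 : 0 ≤ a := by
      rw [ha]
      exact mul_nonneg (by positivity) (Finset.sum_nonneg fun i _ => hw i)
    exact subset_convexHull ℝ _
      (partition_to_mem ℓ n hℓ hℓn hdvd w a ha0 P hPcard hPsum hPall)
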